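/- For all finite hypergraphs H1 and H2, the Cartesian product H1□H2 has the Helly property if and only if both H1 and H2 have the Helly property. -/

import Mathlib

/-!
Basic definitions: finite hypergraphs (a finite nonempty vertex set `V`, given by
`[Fintype V] [Nonempty V]`, together with a set of nonempty edges), walks, distance,
connectedness, simplicity, rank, colorings, Helly property, covers,
the various hypergraph products, 2-sections, and graph products.
-/

/-- A hypergraph on a vertex type `V`: a collection of nonempty edges (finite subsets of `V`). -/
structure Hypergraph' (V : Type*) where
  edges : Set (Finset V)
  nonempty_edges : ∀ e ∈ edges, e.Nonempty

namespace Hypergraph'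

variable {V V₁ V₂ : Type*}

/-- There is a walk of length `n` from `u` to `v`: a sequence of vertices `w 0, …, w n`
and edges `f 1, …, f n` with consecutive vertices distinct and both contained
in the corresponding edge. -/
def HasWalk (H : Hypergraph' V) (u v : V) (n : ℕ) : Prop :=
  ∃ (w : Fin (n + 1) → V) (f : Fin n → Finset V),
    w 0 = u ∧ w (Fin.last n) = v ∧
      ∀ i : Fin n, f i ∈ H.edges ∧ w i.castSucc ≠ w i.succ ∧
        w i.castSucc ∈ f i ∧ w i.succ ∈ f i

/-- The distance between two vertices: the minimum length of a walk joining them,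
`⊤ = ∞` if there is none. -/
noncomputable def dist (H : Hypergraph' V) (u v : V) : ℕ∞ :=
  sInf {x : ℕ∞ | ∃ n : ℕ, x = n ∧ H.HasWalk u v n}

/-- A hypergraph is connected if any two vertices are joined by a walk. -/
def Connected (H : Hypergraph' V) : Prop := ∀ u v : V, ∃ n, H.HasWalk u v n

/-- A hypergraph is simple if every edge has at least two vertices and
no edge is contained in another edge. -/
def Simple (H : Hypergraph' V) : Prop :=
  (∀ e ∈ H.edges, 2 ≤ e.card) ∧ ∀ e ∈ H.edges, ∀ f ∈ H.edges, e ⊆ f → e = f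

/-- A hypergraph is loopless if every edge has at least two vertices. -/
def Loopless (H : Hypergraph' V) : Prop := ∀ e ∈ H.edges, 2 ≤ e.card

/-- The rank: the maximum cardinality of an edge. -/
noncomputable def rank (H : Hypergraph' V) : ℕ := sSup (Finset.card '' H.edges)

/-- The anti-rank: the minimum cardinality of an edge. -/
noncomputable def antirank (H : Hypergraph' V) : ℕ := sInf (Finset.card '' H.edges)

/-- A proper coloring: no color class contains an edge. -/
def IsProperColoring (H : Hypergraph' V) {k : ℕ} (c : V → Fin k) : Prop :=
  ∀ e ∈ H.edges, ∀ i : Fin k, ¬ ∀ v ∈ e, c v = i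

/-- A proper strong coloring: a proper coloring in which the vertices of every
edge receive pairwise distinct colors. -/
def IsStrongColoring (H : Hypergraph' V) {k : ℕ} (c : V → Fin k) : Prop :=
  H.IsProperColoring c ∧ ∀ e ∈ H.edges, ∀ u ∈ e, ∀ v ∈ e, u ≠ v → c u ≠ c v

/-- The chromatic number: the least `k` admitting a proper `k`-coloring. -/
noncomputable def chromaticNumber (H : Hypergraph' V) : ℕ :=
  sInf {k : ℕ | ∃ c : V → Fin k, H.IsProperColoring c}

/-- The strong chromatic number: the least `k` admitting a proper strong `k`-coloring. -/
noncomputable def strongChromaticNumber (H : Hypergraph' V) : ℕ :=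
  sInf {k : ℕ | ∃ c : V → Fin k, H.IsStrongColoring c}

/-- The Helly property: every intersecting family of edges is a star. -/
def Helly (H : Hypergraph' V) : Prop :=
  ∀ E' ⊆ H.edges, (∀ e ∈ E', ∀ f ∈ E', ∃ x, x ∈ e ∧ x ∈ f) → ∃ v, ∀ e ∈ E', v ∈ e

/-- The covering number: the minimum cardinality of a set of vertices meeting every edge. -/
noncomputable def coverNumber (H : Hypergraph' V) : ℕ :=
  sInf {k : ℕ | ∃ T : Finset V, T.card = k ∧ ∀ e ∈ H.edges, ∃ v ∈ T, v ∈ e}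

/-- The Cartesian product of hypergraphs. -/
def cartProd (H₁ : Hypergraph' V₁) (H₂ : Hypergraph' V₂) : Hypergraph' (V₁ × V₂) where
  edges := {E | (∃ x, ∃ f ∈ H₂.edges, E = {x} ×ˢ f) ∨ ∃ e ∈ H₁.edges, ∃ y, E = e ×ˢ {y}}
  nonempty_edges := by
    rintro E (⟨x, f, hf, rfl⟩ | ⟨e, he, y, rfl⟩)
    · exact (Finset.singleton_nonempty x).product (H₂.nonempty_edges f hf)
    · exact (H₁.nonempty_edges e he).product (Finset.singleton_nonempty y)

section Products

variable [DecidableEq V₁] [DecidableEq V₂]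

/-- The minimal-rank-preserving direct product `H₁ ×̌ H₂`. -/
def minDirProd (H₁ : Hypergraph' V₁) (H₂ : Hypergraph' V₂) : Hypergraph' (V₁ × V₂) where
  edges := {E | ∃ e₁ ∈ H₁.edges, ∃ e₂ ∈ H₂.edges,
    E ⊆ e₁ ×ˢ e₂ ∧ E.card = min e₁.card e₂.card ∧
      (E.image Prod.fst).card = min e₁.card e₂.card ∧
      (E.image Prod.snd).card = min e₁.card e₂.card}
  nonempty_edges := by
    rintro E ⟨e₁, h₁, e₂, h₂, -, hc, -, -⟩
    rw [← Finset.card_pos, hc]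
    exact lt_min (Finset.card_pos.mpr (H₁.nonempty_edges e₁ h₁))
      (Finset.card_pos.mpr (H₂.nonempty_edges e₂ h₂))

/-- The maximal-rank-preserving direct product `H₁ ×̂ H₂`. -/
def maxDirProd (H₁ : Hypergraph' V₁) (H₂ : Hypergraph' V₂) : Hypergraph' (V₁ × V₂) where
  edges := {E | ∃ e₁ ∈ H₁.edges, ∃ e₂ ∈ H₂.edges,
    E ⊆ e₁ ×ˢ e₂ ∧ E.card = max e₁.card e₂.card ∧
      E.image Prod.fst = e₁ ∧ E.image Prod.snd = e₂}
  nonempty_edges := by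
    rintro E ⟨e₁, h₁, e₂, h₂, -, hc, -, -⟩
    rw [← Finset.card_pos, hc]
    exact lt_max_iff.mpr (Or.inl (Finset.card_pos.mpr (H₁.nonempty_edges e₁ h₁)))

/-- The non-rank-preserving direct product `H₁ ×̃ H₂`. -/
def nrDirProd (H₁ : Hypergraph' V₁) (H₂ : Hypergraph' V₂) : Hypergraph' (V₁ × V₂) where
  edges := {E | ∃ e ∈ H₁.edges, ∃ f ∈ H₂.edges, ∃ x ∈ e, ∃ y ∈ f,
    E = insert (x, y) ((e.erase x) ×ˢ (f.erase y))}
  nonempty_edges := by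
    rintro E ⟨e, -, f, -, x, -, y, -, rfl⟩
    exact Finset.insert_nonempty _ _

/-- The normal product `H₁ ⊠̌ H₂`: union of the Cartesian product edges and the
minimal-rank-preserving direct product edges. -/
def normalProd (H₁ : Hypergraph' V₁) (H₂ : Hypergraph' V₂) : Hypergraph' (V₁ × V₂) where
  edges := (H₁.cartProd H₂).edges ∪ (H₁.minDirProd H₂).edges
  nonempty_edges := by
    rintro E (h | h)
    · exact (H₁.cartProd H₂).nonempty_edges E h
    · exact (H₁.minDirProd H₂).nonempty_edges E h

/-- The strong product `H₁ ⊠̂ H₂`: union of the Cartesian product edges and the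
maximal-rank-preserving direct product edges. -/
def strongProd (H₁ : Hypergraph' V₁) (H₂ : Hypergraph' V₂) : Hypergraph' (V₁ × V₂) where
  edges := (H₁.cartProd H₂).edges ∪ (H₁.maxDirProd H₂).edges
  nonempty_edges := by
    rintro E (h | h)
    · exact (H₁.cartProd H₂).nonempty_edges E h
    · exact (H₁.maxDirProd H₂).nonempty_edges E h

/-- The lexicographic product `H₁ ∘ H₂`. -/
def lexProd (H₁ : Hypergraph' V₁) (H₂ : Hypergraph' V₂) : Hypergraph' (V₁ × V₂) where
  edges := {E | (E.image Prod.fst ∈ H₁.edges ∧ (E.image Prod.fst).card = E.card) ∨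
    ∃ x, ∃ e₂ ∈ H₂.edges, E = {x} ×ˢ e₂}
  nonempty_edges := by
    rintro E (⟨h₁, hc⟩ | ⟨x, e₂, h₂, rfl⟩)
    · rw [← Finset.card_pos, ← hc]
      exact Finset.card_pos.mpr (H₁.nonempty_edges _ h₁)
    · exact (Finset.singleton_nonempty x).product (H₂.nonempty_edges e₂ h₂)

end Products

/-- The square product `H₁ ■ H₂`. -/
def squareProd (H₁ : Hypergraph' V₁) (H₂ : Hypergraph' V₂) : Hypergraph' (V₁ × V₂) where
  edges := {E | ∃ e₁ ∈ H₁.edges, ∃ e₂ ∈ H₂.edges, E = e₁ ×ˢ e₂}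
  nonempty_edges := by
    rintro E ⟨e₁, h₁, e₂, h₂, rfl⟩
    exact (H₁.nonempty_edges e₁ h₁).product (H₂.nonempty_edges e₂ h₂)

/-- The 2-section of a hypergraph: distinct vertices are adjacent iff they lie
in a common edge. -/
def twoSection (H : Hypergraph' V) : SimpleGraph V where
  Adj x y := x ≠ y ∧ ∃ e ∈ H.edges, x ∈ e ∧ y ∈ e
  symm := by refine ⟨?_⟩; rintro x y ⟨hxy, e, he, hx, hy⟩; exact ⟨hxy.symm, e, he, hy, hx⟩
  loopless := by refine ⟨?_⟩; rintro x ⟨hx, -⟩; exact hx rfl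

end Hypergraph'

namespace SimpleGraph

variable {V₁ V₂ : Type*}

/-- The direct (tensor) product of simple graphs. -/
def directProd (G₁ : SimpleGraph V₁) (G₂ : SimpleGraph V₂) : SimpleGraph (V₁ × V₂) where
  Adj x y := G₁.Adj x.1 y.1 ∧ G₂.Adj x.2 y.2
  symm := ⟨fun _ _ ⟨h₁, h₂⟩ => ⟨h₁.symm, h₂.symm⟩⟩
  loopless := ⟨fun x h => G₁.loopless.irrefl x.1 h.1⟩

/-- The strong product of simple graphs. -/
def strongGraphProd (G₁ : SimpleGraph V₁) (G₂ : SimpleGraph V₂) : SimpleGraph (V₁ × V₂) where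
  Adj x y := x ≠ y ∧ ((x.1 = y.1 ∧ G₂.Adj x.2 y.2) ∨ (x.2 = y.2 ∧ G₁.Adj x.1 y.1) ∨
    (G₁.Adj x.1 y.1 ∧ G₂.Adj x.2 y.2))
  symm := by
    refine ⟨?_⟩
    rintro x y ⟨hne, (⟨h, h'⟩ | ⟨h, h'⟩ | ⟨h, h'⟩)⟩
    · exact ⟨hne.symm, Or.inl ⟨h.symm, h'.symm⟩⟩
    · exact ⟨hne.symm, Or.inr (Or.inl ⟨h.symm, h'.symm⟩)⟩
    · exact ⟨hne.symm, Or.inr (Or.inr ⟨h.symm, h'.symm⟩)⟩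
  loopless := by refine ⟨?_⟩; rintro x ⟨hx, -⟩; exact hx rfl

/-- The lexicographic product of simple graphs. -/
def lexGraphProd (G₁ : SimpleGraph V₁) (G₂ : SimpleGraph V₂) : SimpleGraph (V₁ × V₂) where
  Adj x y := G₁.Adj x.1 y.1 ∨ (x.1 = y.1 ∧ G₂.Adj x.2 y.2)
  symm := by
    refine ⟨?_⟩
    rintro x y (h | ⟨h, h'⟩)
    · exact Or.inl h.symm
    · exact Or.inr ⟨h.symm, h'.symm⟩
  loopless := by
    refine ⟨?_⟩
    rintro x (h | ⟨-, h⟩)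
    · exact G₁.loopless.irrefl x.1 h
    · exact G₂.loopless.irrefl x.2 h

end SimpleGraph

private lemma memV {V₁ V₂ : Type*} {x : V₁} {f : Finset V₂} {a : V₁} {b : V₂} :
    (a, b) ∈ ({x} : Finset V₁) ×ˢ f ↔ a = x ∧ b ∈ f := by
  rw [Finset.mem_product, Finset.mem_singleton]

private lemma memH {V₁ V₂ : Type*} {e : Finset V₁} {y : V₂} {a : V₁} {b : V₂} :
    (a, b) ∈ e ×ˢ ({y} : Finset V₂) ↔ a ∈ e ∧ b = y := by
  rw [Finset.mem_product, Finset.mem_singleton]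

/-- the Cartesian product has the Helly property iff both factors do. -/
theorem helly_cartProd_iff {V₁ V₂ : Type*} [Fintype V₁] [Nonempty V₁]
    [Fintype V₂] [Nonempty V₂] (H₁ : Hypergraph' V₁) (H₂ : Hypergraph' V₂) :
    (H₁.cartProd H₂).Helly ↔ H₁.Helly ∧ H₂.Helly := by
  constructor
  · intro h
    constructor
    · intro E' hE' hint
      obtain ⟨y⟩ := (inferInstance : Nonempty V₂)
      obtain ⟨⟨v, y'⟩, hv⟩ := h ((fun e => e ×ˢ ({y} : Finset V₂)) '' E')
        (by rintro _ ⟨e, he, rfl⟩; exact Or.inr ⟨e, hE' he, y, rfl⟩)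
        (by rintro _ ⟨e, he, rfl⟩ _ ⟨f, hf, rfl⟩
            obtain ⟨x, hx1, hx2⟩ := hint e he f hf
            exact ⟨(x, y), memH.mpr ⟨hx1, rfl⟩, memH.mpr ⟨hx2, rfl⟩⟩)
      exact ⟨v, fun e he => (memH.mp (hv _ ⟨e, he, rfl⟩)).1⟩
    · intro E' hE' hint
      obtain ⟨x⟩ := (inferInstance : Nonempty V₁)
      obtain ⟨⟨x', v⟩, hv⟩ := h ((fun f => ({x} : Finset V₁) ×ˢ f) '' E')
        (by rintro _ ⟨f, hf, rfl⟩; exact Or.inl ⟨x, f, hE' hf, rfl⟩)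
        (by rintro _ ⟨e, he, rfl⟩ _ ⟨f, hf, rfl⟩
            obtain ⟨z, hz1, hz2⟩ := hint e he f hf
            exact ⟨(x, z), memV.mpr ⟨rfl, hz1⟩, memV.mpr ⟨rfl, hz2⟩⟩)
      exact ⟨v, fun f hf => (memV.mp (hv _ ⟨f, hf, rfl⟩)).2⟩
  · rintro ⟨h1, h2⟩ E' hE' hint
    by_cases hV : ∀ g ∈ E', ∃ x, ∃ f ∈ H₂.edges, g = ({x} : Finset V₁) ×ˢ f
    · -- every edge has a vertical representation
      rcases Set.eq_empty_or_nonempty E' with rfl | ⟨g₀, hg₀⟩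
      · obtain ⟨x⟩ := (inferInstance : Nonempty V₁)
        obtain ⟨y⟩ := (inferInstance : Nonempty V₂)
        exact ⟨(x, y), by simp⟩
      obtain ⟨x₀, f₀, hf₀, rfl⟩ := hV g₀ hg₀
      obtain ⟨v, hvmem⟩ := h2 {f | f ∈ H₂.edges ∧ ({x₀} : Finset V₁) ×ˢ f ∈ E'}
        (fun f hf => hf.1)
        (by rintro f ⟨hf, hfE⟩ f' ⟨hf', hf'E⟩
            obtain ⟨⟨a, b⟩, hab1, hab2⟩ := hint _ hfE _ hf'E
            exact ⟨b, (memV.mp hab1).2, (memV.mp hab2).2⟩)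
      refine ⟨(x₀, v), fun g hg => ?_⟩
      obtain ⟨x, f, hf, rfl⟩ := hV g hg
      obtain ⟨⟨a, b⟩, hab1, hab2⟩ := hint _ hg _ hg₀
      have hx : x = x₀ := by rw [← (memV.mp hab1).1, (memV.mp hab2).1]
      subst hx
      exact memV.mpr ⟨rfl, hvmem f ⟨hf, hg⟩⟩
    · push_neg at hV
      obtain ⟨g₀, hg₀, hg₀nv⟩ := hV
      have hg₀h : ∃ e ∈ H₁.edges, ∃ y, g₀ = e ×ˢ ({y} : Finset V₂) := by
        rcases hE' hg₀ with ⟨x, f, hf, hgeq⟩ | h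
        · exact absurd hgeq (hg₀nv x f hf)
        · exact h
      obtain ⟨e₀, he₀, y₀, rfl⟩ := hg₀h
      by_cases hH : ∀ g ∈ E', ∃ e ∈ H₁.edges, ∃ y, g = e ×ˢ ({y} : Finset V₂)
      · -- every edge has a horizontal representation
        obtain ⟨v, hvmem⟩ := h1 {e | e ∈ H₁.edges ∧ e ×ˢ ({y₀} : Finset V₂) ∈ E'}
          (fun e he => he.1)
          (by rintro e ⟨he, heE⟩ e' ⟨he', he'E⟩
              obtain ⟨⟨a, b⟩, hab1, hab2⟩ := hint _ heE _ he'E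
              exact ⟨a, (memH.mp hab1).1, (memH.mp hab2).1⟩)
        refine ⟨(v, y₀), fun g hg => ?_⟩
        obtain ⟨e, he, y, rfl⟩ := hH g hg
        obtain ⟨⟨a, b⟩, hab1, hab2⟩ := hint _ hg _ hg₀
        have hy : y = y₀ := by rw [← (memH.mp hab1).2, (memH.mp hab2).2]
        subst hy
        exact memH.mpr ⟨hvmem e ⟨he, hg⟩, rfl⟩
      · push_neg at hH
        obtain ⟨g₁, hg₁, hg₁nh⟩ := hH
        have hg₁v : ∃ x, ∃ f ∈ H₂.edges, g₁ = ({x} : Finset V₁) ×ˢ f := by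
          rcases hE' hg₁ with h | ⟨e, he, y, hgeq⟩
          · exact h
          · exact absurd hgeq (hg₁nh e he y)
        obtain ⟨x₁, f₁, hf₁, rfl⟩ := hg₁v
        -- common vertex is (x₁, y₀)
        refine ⟨(x₁, y₀), fun g hg => ?_⟩
        rcases hE' hg with ⟨x', f', hf', rfl⟩ | ⟨e', he', y', rfl⟩
        · -- g vertical
          obtain ⟨⟨a, b⟩, hab1, hab2⟩ := hint _ hg _ hg₁
          obtain ⟨⟨c, d⟩, hcd1, hcd2⟩ := hint _ hg _ hg₀
          have hx : x' = x₁ := by rw [← (memV.mp hab1).1, (memV.mp hab2).1]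
          subst hx
          refine memV.mpr ⟨rfl, ?_⟩
          rw [← (memH.mp hcd2).2]
          exact (memV.mp hcd1).2
        · -- g horizontal
          obtain ⟨⟨a, b⟩, hab1, hab2⟩ := hint _ hg _ hg₁
          obtain ⟨⟨c, d⟩, hcd1, hcd2⟩ := hint _ hg _ hg₀
          have hy : y' = y₀ := by rw [← (memH.mp hcd1).2, (memH.mp hcd2).2]
          subst hy
          refine memH.mpr ⟨?_, rfl⟩
          rw [← (memV.mp hab2).1]
          exact (memH.mp hab1).1
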